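/- Let ν be a conjugation-invariant norm on a group Ĝ and μ a semi-homogeneous ν-quasimorphism on Ĝ. If f, g ∈ Ĝ satisfy that f g f⁻¹ commutes with g⁻¹ (equivalently, f commutes with g f⁻¹ g⁻¹), then μ([f,g]) = 0. -/

import Mathlib

open scoped commutatorElement

private lemma aux_zero_of_forall_mul_le (A B : ℝ)
    (h : ∀ n : ℕ, (n : ℝ) * |A| ≤ B) : A = 0 := by
  by_contra hA
  have h0 : 0 < |A| := abs_pos.2 hA
  obtain ⟨n, hn⟩ := exists_nat_gt (B / |A|)
  have hB := h n
  rw [div_lt_iff₀ h0] at hn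
  linarith

private lemma aux_conj_pow {G : Type*} [Group G] (h x : G) (n : ℕ) :
    (h * x * h⁻¹) ^ n = h * x ^ n * h⁻¹ := by
  induction n with
  | zero => simp
  | succ n ih => rw [pow_succ, pow_succ, ih]; group

/-- A semi-homogeneous `ν`-quasimorphism vanishes on `[f,g]` when `f g f⁻¹` commutes
with `g⁻¹`. -/
theorem semihomogeneous_nu_quasimorphism_vanishes_on_commutator
    {G : Type*} [Group G] (ν : G → ℝ)
    (hν1 : ν 1 = 0)
    (hνinv : ∀ f : G, ν f = ν f⁻¹)
    (hνsub : ∀ f g : G, ν (f * g) ≤ ν f + ν g)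
    (hνconj : ∀ f g : G, ν (g * f * g⁻¹) = ν f)
    (hνpos : ∀ f : G, f ≠ 1 → 0 < ν f)
    (μ : G → ℝ) (C : ℝ) (hC : 0 < C)
    (hq : ∀ f g : G, |μ (f * g) - μ f - μ g| ≤ C * min (ν f) (ν g))
    (hsemi : ∀ (f : G) (n : ℕ), μ (f ^ n) = n * μ f)
    (f g : G)
    (hcomm : (f * g * f⁻¹) * g⁻¹ = g⁻¹ * (f * g * f⁻¹)) :
    μ ⁅f, g⁆ = 0 := by
  -- μ is conjugation invariant
  have hconjμ : ∀ h x : G, μ (h * x * h⁻¹) = μ x := by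
    intro h x
    have key : ∀ n : ℕ,
        (n : ℝ) * |μ (h * x * h⁻¹) - μ x| ≤ 2 * (C * ν h) + |μ h| + |μ h⁻¹| := by
      intro n
      have hpow : (h * x * h⁻¹) ^ n = h * (x ^ n * h⁻¹) := by
        rw [aux_conj_pow]; group
      have e1 : μ (h * (x ^ n * h⁻¹)) = (n : ℝ) * μ (h * x * h⁻¹) := by
        rw [← hpow]; exact hsemi _ n
      have e2 : μ (x ^ n) = (n : ℝ) * μ x := hsemi x n
      have q1 : |μ (h * (x ^ n * h⁻¹)) - μ h - μ (x ^ n * h⁻¹)| ≤ C * ν h :=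
        (hq h (x ^ n * h⁻¹)).trans
          (mul_le_mul_of_nonneg_left (min_le_left _ _) hC.le)
      have q2 : |μ (x ^ n * h⁻¹) - μ (x ^ n) - μ h⁻¹| ≤ C * ν h :=
        (hq (x ^ n) h⁻¹).trans
          (mul_le_mul_of_nonneg_left
            ((min_le_right _ _).trans_eq (hνinv h).symm) hC.le)
      rw [e1] at q1
      rw [e2] at q2
      obtain ⟨l1, r1⟩ := abs_le.mp q1
      obtain ⟨l2, r2⟩ := abs_le.mp q2
      have t1 := le_abs_self (μ h)
      have t2 := neg_abs_le (μ h)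
      have t3 := le_abs_self (μ h⁻¹)
      have t4 := neg_abs_le (μ h⁻¹)
      have habs : (n : ℝ) * |μ (h * x * h⁻¹) - μ x|
          = |(n : ℝ) * μ (h * x * h⁻¹) - (n : ℝ) * μ x| := by
        rw [← mul_sub, abs_mul, Nat.abs_cast]
      rw [habs]
      rw [abs_le]
      constructor <;> linarith
    have := aux_zero_of_forall_mul_le (μ (h * x * h⁻¹) - μ x) _ key
    linarith
  -- powers of the commutator
  have hcom : Commute (f * g * f⁻¹) g⁻¹ := hcomm
  have hcn : ∀ n : ℕ, ⁅f, g⁆ ^ n = f * (g ^ n * f⁻¹ * (g ^ n)⁻¹) := by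
    intro n
    have hc : ⁅f, g⁆ = (f * g * f⁻¹) * g⁻¹ := by group
    rw [hc, hcom.mul_pow, aux_conj_pow, inv_pow]
    group
  have key2 : ∀ n : ℕ, (n : ℝ) * |μ ⁅f, g⁆| ≤ C * ν f + |μ f| + |μ f⁻¹| := by
    intro n
    have e1 : μ (f * (g ^ n * f⁻¹ * (g ^ n)⁻¹)) = (n : ℝ) * μ ⁅f, g⁆ := by
      rw [← hcn]; exact hsemi _ n
    have e2 : μ (g ^ n * f⁻¹ * (g ^ n)⁻¹) = μ f⁻¹ := hconjμ (g ^ n) f⁻¹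
    have q1 : |μ (f * (g ^ n * f⁻¹ * (g ^ n)⁻¹)) - μ f
        - μ (g ^ n * f⁻¹ * (g ^ n)⁻¹)| ≤ C * ν f :=
      (hq f (g ^ n * f⁻¹ * (g ^ n)⁻¹)).trans
        (mul_le_mul_of_nonneg_left (min_le_left _ _) hC.le)
    rw [e1, e2] at q1
    obtain ⟨l1, r1⟩ := abs_le.mp q1
    have t1 := le_abs_self (μ f)
    have t2 := neg_abs_le (μ f)
    have t3 := le_abs_self (μ f⁻¹)
    have t4 := neg_abs_le (μ f⁻¹)
    have habs : (n : ℝ) * |μ ⁅f, g⁆| = |(n : ℝ) * μ ⁅f, g⁆| := by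
      rw [abs_mul, Nat.abs_cast]
    rw [habs, abs_le]
    constructor <;> linarith
  exact aux_zero_of_forall_mul_le _ _ key2
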